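/- Let p be a prime and k ≥ 1. Let H be the subgroup of U_{k+2}(ℤ/pℤ) generated by X = I + E_{1,2} + ⋯ + E_{k,k+1} and Y = I + E_{k+1,k+2}. Then the (k+2)-nd term of the lower central series of H is trivial, while the iterated commutator [X^{(k)}, Y] is nontrivial. -/

import Mathlib

open scoped commutatorElement

/-- Iterated commutator in a group: `[x⁽⁰⁾,y] = y`, `[x⁽ⁱ⁾,y] = [x,[x⁽ⁱ⁻¹⁾,y]]`. -/
def iterComm {G : Type*} [Group G] (x y : G) : ℕ → G
  | 0 => y
  | n + 1 => ⁅x, iterComm x y n⁆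

namespace Stmt9Aux

open Matrix Finset

variable {p k : ℕ}

abbrev Mat (p k : ℕ) := Matrix (Fin (k + 2)) (Fin (k + 2)) (ZMod p)

/-- supported on superdiagonals ≥ a -/
def upt (a : ℕ) (A : Mat p k) : Prop :=
  ∀ i j : Fin (k + 2), (j : ℕ) < (i : ℕ) + a → A i j = 0

lemma upt_mono {a b : ℕ} (hab : a ≤ b) {A : Mat p k} (h : upt b A) : upt a A :=
  fun i j hj => h i j (by omega)

lemma upt_zero_matrix (a : ℕ) : upt a (0 : Mat p k) := fun _ _ _ => rfl

lemma upt_add {a : ℕ} {A B : Mat p k} (hA : upt a A) (hB : upt a B) : upt a (A + B) :=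
  fun i j hj => by simp [Matrix.add_apply, hA i j hj, hB i j hj]

lemma upt_neg {a : ℕ} {A : Mat p k} (hA : upt a A) : upt a (-A) :=
  fun i j hj => by simp [Matrix.neg_apply, hA i j hj]

lemma upt_sub {a : ℕ} {A B : Mat p k} (hA : upt a A) (hB : upt a B) : upt a (A - B) := by
  rw [sub_eq_add_neg]; exact upt_add hA (upt_neg hB)

lemma upt_mul {a b : ℕ} {A B : Mat p k} (hA : upt a A) (hB : upt b B) :
    upt (a + b) (A * B) := by
  intro i j hj
  rw [Matrix.mul_apply]
  refine Finset.sum_eq_zero fun l _ => ?_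
  by_cases hl : (l : ℕ) < (i : ℕ) + a
  · rw [hA i l hl, zero_mul]
  · rw [hB l j (by omega), mul_zero]

lemma upt_one_zero : upt 0 (1 : Mat p k) := by
  intro i j hj
  rw [Matrix.one_apply_ne]
  intro h; subst h; omega

lemma upt_pow_zero {A : Mat p k} (hA : upt 0 A) : ∀ m, upt 0 (A ^ m) := by
  intro m
  induction m with
  | zero => simpa using upt_one_zero
  | succ s ih =>
    rw [pow_succ]
    simpa using upt_mul ih hA

lemma upt_pow_one {A : Mat p k} (hA : upt 1 A) : ∀ m, upt m (A ^ m) := by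
  intro m
  induction m with
  | zero => simpa using upt_one_zero
  | succ s ih =>
    rw [pow_succ]
    exact upt_mul ih hA

lemma upt_eq_zero {A : Mat p k} (hA : upt (k + 2) A) : A = 0 := by
  ext i j
  rw [hA i j (by omega)]
  rfl

lemma upt_nilpotent {A : Mat p k} (hA : upt 1 A) : A ^ (k + 2) = 0 :=
  upt_eq_zero (upt_pow_one hA _)

lemma upt_sum {a : ℕ} {ι : Type*} (s : Finset ι) (f : ι → Mat p k)
    (h : ∀ x ∈ s, upt a (f x)) : upt a (∑ x ∈ s, f x) := by
  intro i j hj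
  rw [Matrix.sum_apply]
  exact Finset.sum_eq_zero fun x hx => h x hx i j hj

lemma upt_std {u v : Fin (k + 2)} (h : (u : ℕ) < (v : ℕ)) (c : ZMod p) :
    upt 1 (Matrix.single u v c) := by
  intro i j hj
  apply Matrix.single_apply_of_ne
  rintro ⟨rfl, rfl⟩
  omega

/-- geometric series inverse for unipotent elements -/
lemma geom_mul {A : Mat p k} (hA : upt 1 A) :
    (∑ m ∈ Finset.range (k + 2), (-A) ^ m) * (1 + A) = 1 := by
  have h0 : (-A) ^ (k + 2) = 0 := by
    have := upt_nilpotent (upt_neg hA)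
    simpa using this
  have := geom_sum_mul (-A) (k + 2)
  rw [h0] at this
  have h1 : (-A) - 1 = -(1 + A) := by abel
  rw [h1, mul_neg, zero_sub] at this
  have := congrArg Neg.neg this
  simpa using this

lemma mul_geom {A : Mat p k} (hA : upt 1 A) :
    (1 + A) * (∑ m ∈ Finset.range (k + 2), (-A) ^ m) = 1 := by
  have h0 : (-A) ^ (k + 2) = 0 := by
    have := upt_nilpotent (upt_neg hA)
    simpa using this
  have := mul_geom_sum (-A) (k + 2)
  rw [h0] at this
  have h1 : (-A) - 1 = -(1 + A) := by abel
  rw [h1, neg_mul, zero_sub] at this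
  have := congrArg Neg.neg this
  simpa using this

/-- build a unit from a strictly upper triangular matrix -/
def mkU (A : Mat p k) (h : upt 1 A) : (Mat p k)ˣ where
  val := 1 + A
  inv := ∑ m ∈ Finset.range (k + 2), (-A) ^ m
  val_inv := mul_geom h
  inv_val := geom_mul h

@[simp] lemma mkU_val (A : Mat p k) (h : upt 1 A) : ((mkU A h : (Mat p k)ˣ) : Mat p k) = 1 + A :=
  rfl

lemma mkU_inv_val (A : Mat p k) (h : upt 1 A) :
    (((mkU A h)⁻¹ : (Mat p k)ˣ) : Mat p k) = ∑ m ∈ Finset.range (k + 2), (-A) ^ m :=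
  rfl

/-- the inverse of a unipotent unit: `g⁻¹` is the geometric series -/
lemma inv_val_eq {g : (Mat p k)ˣ} (h : upt 1 ((g : Mat p k) - 1)) :
    ((g⁻¹ : (Mat p k)ˣ) : Mat p k)
      = ∑ m ∈ Finset.range (k + 2), (-((g : Mat p k) - 1)) ^ m := by
  apply Units.inv_eq_of_mul_eq_one_right
  have := mul_geom h
  rwa [add_sub_cancel] at this

lemma inv_sub_one_upt {g : (Mat p k)ˣ} {c : ℕ} (hc : 1 ≤ c)
    (h : upt c ((g : Mat p k) - 1)) :
    upt c (((g⁻¹ : (Mat p k)ˣ) : Mat p k) - 1) := by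
  set A := (g : Mat p k) - 1 with hA
  have h1 : upt 1 A := upt_mono hc h
  rw [inv_val_eq h1]
  have : (∑ m ∈ Finset.range (k + 2), (-A) ^ m) - 1
      = ∑ m ∈ Finset.Ico 1 (k + 2), (-A) ^ m := by
    rw [Finset.range_eq_Ico,
      ← Finset.sum_Ico_consecutive _ (Nat.zero_le 1) (by omega : 1 ≤ k + 2)]
    simp [Nat.Ico_zero_eq_range]
  rw [this]
  apply upt_sum
  intro m hm
  simp only [Finset.mem_Ico] at hm
  obtain ⟨hm1, _⟩ := hm
  obtain ⟨s, rfl⟩ := Nat.exists_eq_add_of_le hm1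
  rw [pow_add, pow_one]
  have h2 : upt c (-A) := upt_neg h
  have h3 : upt 0 ((-A) ^ s) := upt_pow_zero (upt_mono (by omega) h2) s
  have := upt_mul h2 h3
  simpa using this

/-- the subgroup of units `g` with `g - 1` supported on superdiagonals ≥ a+1 -/
def Ga (p k : ℕ) (a : ℕ) : Subgroup (Mat p k)ˣ where
  carrier := {g | upt (a + 1) ((g : Mat p k) - 1)}
  one_mem' := by
    simp only [Set.mem_setOf_eq, Units.val_one, sub_self]
    exact upt_zero_matrix _
  mul_mem' := by
    intro g h hg hh
    simp only [Set.mem_setOf_eq, Units.val_mul] at *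
    have key : (g : Mat p k) * h - 1
        = ((g : Mat p k) - 1) + ((h : Mat p k) - 1) + ((g : Mat p k) - 1) * ((h : Mat p k) - 1) := by
      noncomm_ring
    rw [key]
    refine upt_add (upt_add hg hh) (upt_mono ?_ (upt_mul hg hh))
    omega
  inv_mem' := by
    intro g hg
    simp only [Set.mem_setOf_eq] at *
    exact inv_sub_one_upt (by omega) hg

lemma comm_upt {g h : (Mat p k)ˣ} {a b : ℕ}
    (ha : upt (a + 1) ((g : Mat p k) - 1)) (hb : upt (b + 1) ((h : Mat p k) - 1)) :
    upt (a + b + 2) (((⁅g, h⁆ : (Mat p k)ˣ) : Mat p k) - 1) := by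
  have hginv : upt 1 (((g⁻¹ : (Mat p k)ˣ) : Mat p k) - 1) :=
    inv_sub_one_upt (by omega) (upt_mono (by omega) ha : upt 1 _)
  have hhinv : upt 1 (((h⁻¹ : (Mat p k)ˣ) : Mat p k) - 1) :=
    inv_sub_one_upt (by omega) (upt_mono (by omega) hb : upt 1 _)
  have hprod : upt 1 (((g⁻¹ : (Mat p k)ˣ) : Mat p k) * ((h⁻¹ : (Mat p k)ˣ) : Mat p k) - 1) := by
    have key : ((g⁻¹ : (Mat p k)ˣ) : Mat p k) * ((h⁻¹ : (Mat p k)ˣ) : Mat p k) - 1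
        = (((g⁻¹ : (Mat p k)ˣ) : Mat p k) - 1) + (((h⁻¹ : (Mat p k)ˣ) : Mat p k) - 1)
          + (((g⁻¹ : (Mat p k)ˣ) : Mat p k) - 1) * (((h⁻¹ : (Mat p k)ˣ) : Mat p k) - 1) := by
      noncomm_ring
    rw [key]
    exact upt_add (upt_add hginv hhinv) (upt_mono (by omega) (upt_mul hginv hhinv))
  have key : ((⁅g, h⁆ : (Mat p k)ˣ) : Mat p k) - 1
      = (((g : Mat p k) - 1) * ((h : Mat p k) - 1) - ((h : Mat p k) - 1) * ((g : Mat p k) - 1))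
        * (1 + (((g⁻¹ : (Mat p k)ˣ) : Mat p k) * ((h⁻¹ : (Mat p k)ˣ) : Mat p k) - 1)) := by
    rw [commutatorElement_def]
    simp only [Units.val_mul, add_sub_cancel]
    have e1 : ((g : Mat p k) - 1) * ((h : Mat p k) - 1)
          - ((h : Mat p k) - 1) * ((g : Mat p k) - 1)
        = (g : Mat p k) * h - (h : Mat p k) * g := by noncomm_ring
    rw [e1, sub_mul]
    have e2 : (h : Mat p k) * ((g : Mat p k) * (((g⁻¹ : (Mat p k)ˣ) : Mat p k)
        * ((h⁻¹ : (Mat p k)ˣ) : Mat p k))) = 1 := by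
      rw [← mul_assoc (g : Mat p k), Units.mul_inv, one_mul, Units.mul_inv]
    rw [mul_assoc ((h : Mat p k)) ((g : Mat p k)), e2, mul_assoc ((g : Mat p k) * h)]
  rw [key, mul_add, mul_one]
  have h1 : upt (a + b + 2)
      (((g : Mat p k) - 1) * ((h : Mat p k) - 1) - ((h : Mat p k) - 1) * ((g : Mat p k) - 1)) := by
    have t1 := upt_mul ha hb
    rw [show a + 1 + (b + 1) = a + b + 2 by omega] at t1
    have t2 := upt_mul hb ha
    rw [show b + 1 + (a + 1) = a + b + 2 by omega] at t2
    exact upt_sub t1 t2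
  exact upt_add h1 (upt_mono (by omega) (upt_mul h1 hprod))


/-! ### The concrete generators -/

def Nm (p k : ℕ) : Mat p k :=
  ∑ j : Fin k, Matrix.single (j.castLE (Nat.le_add_right k 2)) (j.succ.castLE (Nat.succ_le_succ (Nat.le_succ k))) (1 : ZMod p)

def Em (p k : ℕ) : Mat p k :=
  Matrix.single (⟨k, Nat.lt_succ_of_lt (Nat.lt_succ_self k)⟩ : Fin (k + 2)) ⟨k + 1, Nat.lt_succ_self (k + 1)⟩ (1 : ZMod p)

lemma upt_Nm : upt 1 (Nm p k) := by
  apply upt_sum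
  intro j _
  exact upt_std (by simp) 1

lemma upt_Em : upt 1 (Em p k) := upt_std (by simp) 1

def Xu (p k : ℕ) : (Mat p k)ˣ := mkU (Nm p k) upt_Nm

def Yu (p k : ℕ) : (Mat p k)ˣ := mkU (Em p k) upt_Em

def Fm (p k j : ℕ) (h : j < k + 2) : Mat p k :=
  Matrix.single (⟨j, h⟩ : Fin (k + 2)) ⟨k + 1, Nat.lt_succ_self (k + 1)⟩ (1 : ZMod p)

lemma Fm_congr {a b : ℕ} (h : a = b) (ha : a < k + 2) (hb : b < k + 2) :
    Fm p k a ha = Fm p k b hb := by subst h; rfl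

lemma Nm_mul_Fm (j : ℕ) (h1 : 1 ≤ j) (h2 : j ≤ k) :
    Nm p k * Fm p k j (by omega) = Fm p k (j - 1) (by omega) := by
  rw [Nm, Finset.sum_mul,
    Finset.sum_eq_single_of_mem (⟨j - 1, by omega⟩ : Fin k) (Finset.mem_univ _)]
  · have e : ((⟨j - 1, by omega⟩ : Fin k).succ.castLE (by omega) : Fin (k + 2))
        = (⟨j, by omega⟩ : Fin (k + 2)) := by
      apply Fin.ext; simp; omega
    rw [Fm, e, Matrix.single_mul_single_same, Fm]
    have e2 : ((⟨j - 1, by omega⟩ : Fin k).castLE (by omega) : Fin (k + 2))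
        = (⟨j - 1, by omega⟩ : Fin (k + 2)) := by
      apply Fin.ext; simp
    rw [e2, one_mul]
  · intro a _ hne
    apply Matrix.single_mul_single_of_ne
    intro hc
    apply hne
    apply Fin.ext
    have := congrArg Fin.val hc
    simp only [Fin.coe_castLE, Fin.val_succ] at this
    simp
    omega

lemma Fm_mul_Nm (j : ℕ) (h : j < k + 2) : Fm p k j h * Nm p k = 0 := by
  rw [Nm, Finset.mul_sum]
  refine Finset.sum_eq_zero fun a _ => ?_
  apply Matrix.single_mul_single_of_ne
  intro hc
  have := congrArg Fin.val hc
  simp only [Fin.coe_castLE] at this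
  have := a.isLt
  omega

lemma Fm_mul_Fm (a b : ℕ) (ha : a < k + 2) (hb : b < k + 2) (hbk : b ≤ k) :
    Fm p k a ha * Fm p k b hb = 0 := by
  apply Matrix.single_mul_single_of_ne
  intro hc
  rw [Fin.mk.injEq] at hc
  omega

lemma Fm_mul_Xinv (j : ℕ) (h : j < k + 2) :
    Fm p k j h * (((Xu p k)⁻¹ : (Mat p k)ˣ) : Mat p k) = Fm p k j h := by
  rw [Xu, mkU_inv_val, Finset.mul_sum,
    Finset.sum_eq_single_of_mem 0 (by simp)]
  · simp
  · intro m hm hne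
    obtain ⟨s, rfl⟩ := Nat.exists_eq_succ_of_ne_zero hne
    rw [pow_succ', ← mul_assoc, mul_neg, Fm_mul_Nm, neg_zero, zero_mul]

lemma comm_step (j : ℕ) (hj1 : 1 ≤ j) (hj2 : j ≤ k) (V : (Mat p k)ˣ)
    (hV : (V : Mat p k) = 1 + Fm p k j (by omega)) :
    ((⁅Xu p k, V⁆ : (Mat p k)ˣ) : Mat p k) = 1 + Fm p k (j - 1) (by omega) := by
  have hFF : Fm p k j (by omega) * Fm p k j (by omega) = 0 := Fm_mul_Fm _ _ _ _ hj2
  have hF'F : Fm p k (j - 1) (by omega) * Fm p k j (by omega) = 0 := Fm_mul_Fm _ _ _ _ hj2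
  have hVinv : ((V⁻¹ : (Mat p k)ˣ) : Mat p k) = 1 - Fm p k j (by omega) := by
    apply Units.inv_eq_of_mul_eq_one_right
    rw [hV]
    have e : (1 + Fm p k j (by omega)) * (1 - Fm p k j (by omega))
        = 1 - Fm p k j (by omega) * Fm p k j (by omega) := by noncomm_ring
    rw [e, hFF, sub_zero]
  rw [commutatorElement_def]
  simp only [Units.val_mul]
  rw [hV, hVinv]
  have hX : ((Xu p k : (Mat p k)ˣ) : Mat p k) = 1 + Nm p k := rfl
  rw [hX]
  have e1 : ((1 : Mat p k) + Nm p k) * (1 + Fm p k j (by omega))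
      = (1 + Nm p k) + (Fm p k j (by omega) + Fm p k (j - 1) (by omega)) := by
    simp only [mul_add, mul_one, add_mul, one_mul, Nm_mul_Fm j hj1 hj2]
    try abel
  rw [e1, add_mul]
  have e2 : ((1 : Mat p k) + Nm p k) * (((Xu p k)⁻¹ : (Mat p k)ˣ) : Mat p k) = 1 := by
    have := (Xu p k).mul_inv
    rwa [hX] at this
  rw [e2, add_mul (Fm p k j (by omega)) (Fm p k (j - 1) (by omega))
    (((Xu p k)⁻¹ : (Mat p k)ˣ) : Mat p k), Fm_mul_Xinv, Fm_mul_Xinv]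
  have e3 : ((1 : Mat p k) + (Fm p k j (by omega) + Fm p k (j - 1) (by omega)))
        * (1 - Fm p k j (by omega))
      = 1 + Fm p k (j - 1) (by omega)
        - Fm p k j (by omega) * Fm p k j (by omega)
        - Fm p k (j - 1) (by omega) * Fm p k j (by omega) := by noncomm_ring
  rw [e3, hFF, hF'F, sub_zero, sub_zero]

lemma iter_val : ∀ i, i ≤ k → ((iterComm (Xu p k) (Yu p k) i : (Mat p k)ˣ) : Mat p k)
    = 1 + Fm p k (k - i) (by omega) := by
  intro i
  induction i with
  | zero =>
    intro _
    rfl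
  | succ s ih =>
    intro hs
    have h1 : s ≤ k := by omega
    have step := comm_step (k - s) (by omega) (by omega) _ (ih h1)
    rw [show iterComm (Xu p k) (Yu p k) (s + 1) = ⁅Xu p k, iterComm (Xu p k) (Yu p k) s⁆
      from rfl]
    rw [step, Fm_congr (by omega : k - s - 1 = k - (s + 1))]

lemma iter_ne_one (hp : p.Prime) : iterComm (Xu p k) (Yu p k) k ≠ 1 := by
  haveI : Fact (1 < p) := ⟨hp.one_lt⟩
  intro h
  have hv := iter_val (p := p) (k := k) k le_rfl
  rw [h, Units.val_one, Fm_congr (hb := by omega) (by omega : k - k = 0)] at hv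
  have h2 := congrFun (congrFun hv (⟨0, by omega⟩ : Fin (k + 2))) ⟨k + 1, by omega⟩
  rw [Matrix.one_apply_ne (by simp [Fin.ext_iff])] at h2
  rw [Matrix.add_apply, Matrix.one_apply_ne (by simp [Fin.ext_iff]), Fm,
    Matrix.single_apply_same, zero_add] at h2
  exact one_ne_zero h2.symm

/-! ### Lower central series -/

def Hgrp (p k : ℕ) : Subgroup (Mat p k)ˣ := Subgroup.closure {Xu p k, Yu p k}

lemma mem_Ga {a : ℕ} {g : (Mat p k)ˣ} :
    g ∈ Ga p k a ↔ upt (a + 1) ((g : Mat p k) - 1) := Iff.rfl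

lemma Hgrp_le_Ga : Hgrp p k ≤ Ga p k 0 := by
  rw [Hgrp, Subgroup.closure_le]
  rintro g hg
  rcases hg with rfl | hg
  · rw [SetLike.mem_coe, mem_Ga, show ((Xu p k : (Mat p k)ˣ) : Mat p k) = 1 + Nm p k from rfl,
      add_sub_cancel_left]
    exact upt_Nm
  · rw [Set.mem_singleton_iff] at hg
    subst hg
    rw [SetLike.mem_coe, mem_Ga, show ((Yu p k : (Mat p k)ˣ) : Mat p k) = 1 + Em p k from rfl,
      add_sub_cancel_left]
    exact upt_Em

lemma lcs_upt (n : ℕ) : ∀ g : (Mat p k)ˣ, g ∈ lowerCentralSeries (Hgrp p k) n →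
    upt (n + 1) ((((g : (Mat p k)ˣ)) : Mat p k) - 1) := by
  induction n with
  | zero =>
    intro g _
    exact Hgrp_le_Ga ‹_›
  | succ n ih =>
    intro g hg
    have key : lowerCentralSeries (Hgrp p k) (n + 1)
        ≤ Ga p k (n + 1) := by
      show ⁅lowerCentralSeries (Hgrp p k) n, Hgrp p k⁆ ≤ _
      rw [Subgroup.commutator_le]
      intro x hx y hy
      rw [mem_Ga]
      have hb := Hgrp_le_Ga hy
      have := comm_upt (ih x hx) hb
      rwa [show n + 0 + 2 = n + 1 + 1 by omega] at this
    exact key hg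

lemma lcs_bot : lowerCentralSeries (Hgrp p k) (k + 1) = ⊥ := by
  rw [eq_bot_iff]
  intro g hg
  rw [Subgroup.mem_bot]
  have h1 := lcs_upt (k + 1) g hg
  have h2 : (((g : (Mat p k)ˣ)) : Mat p k) - 1 = 0 := upt_eq_zero h1
  exact Units.ext (by rw [Units.val_one, ← sub_eq_zero]; exact h2)

end Stmt9Aux

theorem stmt_9 (p k : ℕ) (hp : p.Prime) (hk : 1 ≤ k) :
    ∃ X Y : (Matrix (Fin (k + 2)) (Fin (k + 2)) (ZMod p))ˣ,
      (X : Matrix (Fin (k + 2)) (Fin (k + 2)) (ZMod p)) =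
        1 + ∑ j : Fin k,
          Matrix.single (j.castLE (by omega)) (j.succ.castLE (by omega)) (1 : ZMod p) ∧
      (Y : Matrix (Fin (k + 2)) (Fin (k + 2)) (ZMod p)) =
        1 + Matrix.single (⟨k, by omega⟩ : Fin (k + 2)) ⟨k + 1, by omega⟩ (1 : ZMod p) ∧
      lowerCentralSeries (Subgroup.closure {X, Y} :
        Subgroup (Matrix (Fin (k + 2)) (Fin (k + 2)) (ZMod p))ˣ) (k + 1) = ⊥ ∧
      iterComm X Y k ≠ 1 := by
  refine ⟨Stmt9Aux.Xu p k, Stmt9Aux.Yu p k, rfl, rfl, Stmt9Aux.lcs_bot, Stmt9Aux.iter_ne_one hp⟩
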